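/- Let BG = (V, E) be a bi-directed graph and let BG^t be its ListRankingTransform. If there is a (nonempty) directed path in BG^t from u^a to v^b for some orientations a, b ∈ {▷, ◁}, then there is a valid bi-directed walk in BG from u to v. -/
import Mathlib


/-- Orientations of the arrowheads of a bi-directed edge: `fwd` = ▷, `rev` = ◁. -/
inductive Orient : Type
  | fwd | rev
  deriving DecidableEq

/-- `¬` on orientations: swaps ▷ and ◁. -/
def Orient.neg : Orient → Orient
  | .fwd => .rev
  | .rev => .fwd

/-- A valid bi-directed walk of length `m ≥ 1` from `u` to `v` in the bi-directed graph
with edge set `E`: a vertex sequence `vert 0 = u, …, vert m = v` together with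
orientation pairs `(a l, b l)` for `1 ≤ l ≤ m` such that each step traverses a
bi-directed edge (in either direction) and the orientations of consecutive edges agree
at each intermediate vertex. -/
def IsBiWalk {V : Type*} (E : Set (V × V × Orient × Orient)) (m : ℕ)
    (vert : ℕ → V) (a b : ℕ → Orient) (u v : V) : Prop :=
  1 ≤ m ∧ vert 0 = u ∧ vert m = v ∧
  (∀ l, 1 ≤ l → l ≤ m →
    (vert (l - 1), vert l, a l, b l) ∈ E ∨
    (vert l, vert (l - 1), (b l).neg, (a l).neg) ∈ E) ∧
  (∀ l, 1 ≤ l → l < m → b l = a (l + 1))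

/-- There is a valid bi-directed walk from `u` to `v`. -/
def BiWalk {V : Type*} (E : Set (V × V × Orient × Orient)) (u v : V) : Prop :=
  ∃ m vert a b, IsBiWalk E m vert a b u v

/-- The arcs of the directed graph `BGᵗ` produced by the ListRankingTransform on vertex
set `V × Orient` (writing `v^o` for `(v, o)`): each bi-directed edge `(u, v, o₁, o₂) ∈ E`
yields the two directed arcs `u^{o₁} → v^{o₂}` and `v^{¬o₂} → u^{¬o₁}`. -/
def TArc {V : Type*} (E : Set (V × V × Orient × Orient)) (p q : V × Orient) : Prop :=
  ∃ u v o₁ o₂, (u, v, o₁, o₂) ∈ E ∧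
    ((p = (u, o₁) ∧ q = (v, o₂)) ∨ (p = (v, o₂.neg) ∧ q = (u, o₁.neg)))

theorem Orient.neg_neg (o : Orient) : o.neg.neg = o := by cases o <;> rfl

theorem tArc_step {V : Type*} (E : Set (V × V × Orient × Orient)) {c q : V × Orient}
    (h : TArc E c q) :
    (c.1, q.1, c.2, q.2) ∈ E ∨ (q.1, c.1, (q.2).neg, (c.2).neg) ∈ E := by
  obtain ⟨x, y, o₁, o₂, hE, hc | hc⟩ := h
  · obtain ⟨rfl, rfl⟩ := hc
    exact Or.inl hE
  · obtain ⟨rfl, rfl⟩ := hc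
    right
    simpa [Orient.neg_neg] using hE

/-- A (nonempty) directed path in the ListRankingTransform from `u^a` to
`v^b` yields a valid bi-directed walk from `u` to `v` in the bi-directed graph. -/
theorem biWalk_of_transGen_tArc {V : Type*} (E : Set (V × V × Orient × Orient))
    (u v : V) (a b : Orient) (h : Relation.TransGen (TArc E) (u, a) (v, b)) :
    BiWalk E u v := by
  have key : ∀ q : V × Orient, Relation.TransGen (TArc E) (u, a) q →
      ∃ m vert aa bb, IsBiWalk E m vert aa bb u q.1 ∧ aa 1 = a ∧ bb m = q.2 := by
    intro q h
    induction h with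
    | @single q harc =>
      exact ⟨1, fun l => if l = 0 then u else q.1, fun _ => a, fun _ => q.2,
        ⟨le_refl 1, rfl, rfl,
          fun l hl hl' => by
            interval_cases l
            simpa using tArc_step E harc,
          fun l hl hl' => absurd (lt_of_le_of_lt hl hl') (lt_irrefl 1)⟩, rfl, rfl⟩
    | @tail c q h2 harc ih =>
      obtain ⟨m, vert, aa, bb, ⟨hm, h0, hmc, hedge, hcons⟩, ha1, hbm⟩ := ih
      refine ⟨m + 1, fun l => if l ≤ m then vert l else q.1,
        fun l => if l ≤ m then aa l else c.2,
        fun l => if l ≤ m then bb l else q.2, ⟨Nat.le_add_left 1 m,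
        by simp [Nat.zero_le, h0], by simp, ?_, ?_⟩,
        by simp [hm, ha1], by simp⟩
      · intro l hl hl'
        rcases Nat.lt_or_ge l (m + 1) with hlt | hge
        · have hle : l ≤ m := Nat.lt_succ_iff.mp hlt
          have hle' : l - 1 ≤ m := le_trans (Nat.sub_le l 1) hle
          simpa [hle, hle'] using hedge l hl hle
        · have : l = m + 1 := le_antisymm hl' hge
          subst this
          have h1 : ¬ (m + 1 ≤ m) := Nat.not_succ_le_self m
          have h2' : m + 1 - 1 ≤ m := by simp
          simp only [h1, if_neg, h2', if_pos, Nat.add_sub_cancel, le_refl, if_true]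
          simpa [hmc] using tArc_step E harc
      · intro l hl hl'
        rcases Nat.lt_or_ge l m with hlt | hge
        · have hle : l ≤ m := le_of_lt hlt
          have hle' : l + 1 ≤ m := hlt
          simpa [hle, hle'] using hcons l hl hlt
        · have : l = m := le_antisymm (Nat.lt_succ_iff.mp hl') hge
          subst this
          simp [Nat.not_succ_le_self, hbm]
  obtain ⟨m, vert, aa, bb, hw, _, _⟩ := key (v, b) h
  exact ⟨m, vert, aa, bb, hw⟩
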